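/- Let r ≥ 2 be an integer. The functions ζ_1, ζ_2, …, ζ_{r−1} : ℂ → ℂ are linearly independent over ℂ. -/

import Mathlib

open Complex

/-- The theta function `θ_j(z) = Σ_{n ∈ ℤ} exp(−π(2rn² + 2jn) + 2πiz(j + 2rn))`. -/
noncomputable def theta (r : ℕ) (j : ℤ) (z : ℂ) : ℂ :=
  ∑' n : ℤ, Complex.exp (-(Real.pi : ℂ) * (2 * r * (n : ℂ) ^ 2 + 2 * j * n) +
    2 * (Real.pi : ℂ) * Complex.I * z * ((j : ℂ) + 2 * r * n))

/-- `ζ_j(z) = r^{1/4} e^{−πj²/(2r)} (θ_j(z) − θ_{−j}(z))`. -/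
noncomputable def zeta (r : ℕ) (j : ℤ) (z : ℂ) : ℂ :=
  (((r : ℝ) ^ ((1 : ℝ) / 4) : ℝ) : ℂ) *
    Complex.exp (-(Real.pi : ℂ) * (j : ℂ) ^ 2 / (2 * r)) * (theta r j z - theta r (-j) z)

/-- The quantized integer `[n] = sin(nπ/r)/sin(π/r)`. -/
noncomputable def qint (r : ℕ) (n : ℤ) : ℝ :=
  Real.sin (n * Real.pi / r) / Real.sin (Real.pi / r)

noncomputable def trm (r : ℕ) (j n : ℤ) (z : ℂ) : ℂ :=
  Complex.exp (-(Real.pi : ℂ) * (2 * r * (n : ℂ) ^ 2 + 2 * j * n) +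
    2 * (Real.pi : ℂ) * Complex.I * z * ((j : ℂ) + 2 * r * n))

lemma trm_eq (r : ℕ) (j n : ℤ) (z : ℂ) :
    trm r j n z = Complex.exp (2 * Real.pi * Complex.I * z * j) *
      jacobiTheta₂_term n (2 * r * z + j * Complex.I) (2 * r * Complex.I) := by
  rw [trm, jacobiTheta₂_term, ← Complex.exp_add]
  congr 1
  ring_nf
  rw [Complex.I_sq]
  ring

lemma summable_trm (r : ℕ) (hr : 0 < r) (j : ℤ) (z : ℂ) :
    Summable (fun n : ℤ => trm r j n z) := by
  simp_rw [trm_eq]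
  apply Summable.mul_left
  rw [summable_jacobiTheta₂_term_iff]
  simp [hr]

lemma norm_trm (r : ℕ) (j n : ℤ) (x : ℝ) :
    ‖trm r j n (x : ℂ)‖ = Real.exp (-(Real.pi) * (2 * r * (n : ℝ) ^ 2 + 2 * j * n)) := by
  have h : trm r j n (x : ℂ) =
      Complex.exp (((-(Real.pi) * (2 * r * (n : ℝ) ^ 2 + 2 * j * n) : ℝ) : ℂ)) *
      Complex.exp (((2 * Real.pi * x * (j + 2 * r * n) : ℝ) : ℂ) * Complex.I) := by
    rw [trm, ← Complex.exp_add]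
    push_cast
    ring_nf
  rw [h, norm_mul, Complex.norm_exp_ofReal,
    Complex.norm_exp_ofReal_mul_I, mul_one]

lemma summable_norm_trm (r : ℕ) (hr : 0 < r) (j : ℤ) (x : ℝ) :
    Summable (fun n : ℤ => Real.exp (-(Real.pi) * (2 * r * (n : ℝ) ^ 2 + 2 * j * n))) := by
  have := (summable_trm r hr j ((0:ℝ) : ℂ)).norm
  simpa only [norm_trm] using this

lemma continuous_trm (r : ℕ) (j n : ℤ) : Continuous (fun x : ℝ => trm r j n (x : ℂ)) := by
  apply Complex.continuous_exp.comp
  fun_prop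

lemma continuous_theta (r : ℕ) (hr : 0 < r) (j : ℤ) :
    Continuous (fun x : ℝ => theta r j (x : ℂ)) := by
  have : (fun x : ℝ => theta r j (x : ℂ)) = fun x : ℝ => ∑' n : ℤ, trm r j n (x : ℂ) := rfl
  rw [this]
  apply continuous_tsum (continuous_trm r j)
    (summable_norm_trm r hr j 0)
  intro n x
  rw [norm_trm]

open MeasureTheory intervalIntegral in
lemma integral_trm (r : ℕ) (j m n : ℤ) :
    (∫ x in (0:ℝ)..1, trm r j n (x : ℂ) * Complex.exp (2 * Real.pi * Complex.I * (-m) * x)) =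
      if j + 2 * (r:ℤ) * n = m then
        Complex.exp (-(Real.pi : ℂ) * (2 * r * (n : ℂ) ^ 2 + 2 * j * n)) else 0 := by
  have key : ∀ x : ℝ, trm r j n (x : ℂ) * Complex.exp (2 * Real.pi * Complex.I * (-m) * x) =
      Complex.exp (-(Real.pi : ℂ) * (2 * r * (n : ℂ) ^ 2 + 2 * j * n)) *
      Complex.exp ((2 * Real.pi * Complex.I * ((j + 2 * (r:ℤ) * n - m : ℤ) : ℂ)) * x) := by
    intro x
    rw [trm, ← Complex.exp_add, ← Complex.exp_add]
    congr 1
    push_cast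
    ring
  simp_rw [key]
  rw [intervalIntegral.integral_const_mul]
  by_cases h : j + 2 * (r:ℤ) * n = m
  · have h0 : ((j + 2 * (r:ℤ) * n - m : ℤ) : ℂ) = 0 := by
      rw [h]; push_cast; ring
    simp [h, h0]
  · rw [if_neg h]
    have hK : ((j + 2 * (r:ℤ) * n - m : ℤ) : ℂ) ≠ 0 := by
      exact_mod_cast fun hc => h (by exact_mod_cast sub_eq_zero.mp (by exact_mod_cast hc))
    have hc : (2 * (Real.pi:ℂ) * Complex.I * ((j + 2 * (r:ℤ) * n - m : ℤ) : ℂ)) ≠ 0 := by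
      simp only [mul_ne_zero_iff]
      refine ⟨⟨⟨two_ne_zero, ?_⟩, Complex.I_ne_zero⟩, hK⟩
      exact_mod_cast Real.pi_ne_zero
    rw [integral_exp_mul_complex hc]
    rw [Complex.ofReal_one, Complex.ofReal_zero, mul_one, mul_zero, Complex.exp_zero]
    have : Complex.exp (2 * (Real.pi:ℂ) * Complex.I * ((j + 2 * (r:ℤ) * n - m : ℤ) : ℂ)) = 1 := by
      rw [show (2 * (Real.pi:ℂ) * Complex.I * ((j + 2 * (r:ℤ) * n - m : ℤ) : ℂ)) =
        ((j + 2 * (r:ℤ) * n - m : ℤ) : ℂ) * (2 * Real.pi * Complex.I) by ring]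
      exact Complex.exp_int_mul_two_pi_mul_I _
    rw [this]
    simp

open MeasureTheory intervalIntegral in
lemma integral_theta (r : ℕ) (hr : 0 < r) (j m : ℤ) :
    (∫ x in (0:ℝ)..1, theta r j (x : ℂ) * Complex.exp (2 * Real.pi * Complex.I * (-m) * x)) =
      ∑' n : ℤ, (if j + 2 * (r:ℤ) * n = m then
        Complex.exp (-(Real.pi : ℂ) * (2 * r * (n : ℂ) ^ 2 + 2 * j * n)) else 0) := by
  have hE : ∀ x : ℝ, ‖Complex.exp (2 * Real.pi * Complex.I * (-m) * (x:ℂ))‖ = 1 := by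
    intro x
    rw [show (2 * (Real.pi:ℂ) * Complex.I * (-m) * (x:ℂ)) =
      ((2 * Real.pi * (-m) * x : ℝ) : ℂ) * Complex.I by push_cast; ring]
    exact Complex.norm_exp_ofReal_mul_I _
  have hcont : ∀ n : ℤ, Continuous
      (fun x : ℝ => trm r j n (x : ℂ) * Complex.exp (2 * Real.pi * Complex.I * (-m) * x)) := by
    intro n
    exact (continuous_trm r j n).mul (Complex.continuous_exp.comp (by fun_prop))
  have hint : ∀ n : ℤ, Integrable
      (fun x : ℝ => trm r j n (x : ℂ) * Complex.exp (2 * Real.pi * Complex.I * (-m) * x))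
      (volume.restrict (Set.Ioc (0:ℝ) 1)) := by
    intro n
    exact ((hcont n).integrableOn_Ioc : IntegrableOn _ (Set.Ioc (0:ℝ) 1) volume)
  have hswap := MeasureTheory.integral_tsum_of_summable_integral_norm (μ := volume.restrict (Set.Ioc (0:ℝ) 1)) hint ?_
  · rw [intervalIntegral.integral_of_le zero_le_one]
    have heq : ∀ x : ℝ, theta r j (x : ℂ) * Complex.exp (2 * Real.pi * Complex.I * (-m) * x) =
        ∑' n : ℤ, trm r j n (x : ℂ) * Complex.exp (2 * Real.pi * Complex.I * (-m) * x) := by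
      intro x
      rw [theta, tsum_mul_right]
      rfl
    simp_rw [heq]
    rw [← hswap]
    congr 1
    ext n
    rw [← intervalIntegral.integral_of_le zero_le_one, integral_trm]
  · have hval : ∀ n : ℤ, (∫ x, ‖trm r j n (x : ℂ) *
        Complex.exp (2 * Real.pi * Complex.I * (-m) * x)‖ ∂(volume.restrict (Set.Ioc (0:ℝ) 1))) =
        Real.exp (-(Real.pi) * (2 * r * (n : ℝ) ^ 2 + 2 * j * n)) := by
      intro n
      have : ∀ x : ℝ, ‖trm r j n (x : ℂ) * Complex.exp (2 * Real.pi * Complex.I * (-m) * (x:ℂ))‖ =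
          Real.exp (-(Real.pi) * (2 * r * (n : ℝ) ^ 2 + 2 * j * n)) := by
        intro x
        rw [norm_mul, norm_trm, hE, mul_one]
      simp_rw [this]
      simp [Real.volume_Ioc]
    simp_rw [hval]
    exact summable_norm_trm r hr j 0

lemma arith_a (r : ℕ) (hr : 2 ≤ r) {j m : ℤ} (hj1 : 1 ≤ j) (hj2 : j ≤ (r:ℤ) - 1)
    (hm1 : 1 ≤ m) (hm2 : m ≤ (r:ℤ) - 1) (n : ℤ) (h : j + 2 * (r:ℤ) * n = m) :
    j = m ∧ n = 0 := by
  have hr' : (2:ℤ) ≤ r := by exact_mod_cast hr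
  rcases lt_trichotomy n 0 with h1 | h1 | h1
  · exfalso
    have h2 : 2 * (r:ℤ) * n ≤ 2 * (r:ℤ) * (-1) :=
      mul_le_mul_of_nonneg_left (by omega) (by positivity)
    linarith
  · subst h1; constructor <;> omega
  · exfalso
    have h2 : 2 * (r:ℤ) * 1 ≤ 2 * (r:ℤ) * n :=
      mul_le_mul_of_nonneg_left (by omega) (by positivity)
    linarith

lemma arith_b (r : ℕ) (hr : 2 ≤ r) {j m : ℤ} (hj1 : 1 ≤ j) (hj2 : j ≤ (r:ℤ) - 1)
    (hm1 : 1 ≤ m) (hm2 : m ≤ (r:ℤ) - 1) (n : ℤ) : -j + 2 * (r:ℤ) * n ≠ m := by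
  have hr' : (2:ℤ) ≤ r := by exact_mod_cast hr
  intro h
  rcases le_or_gt n 0 with h1 | h1
  · have h2 : 2 * (r:ℤ) * n ≤ 2 * (r:ℤ) * 0 :=
      mul_le_mul_of_nonneg_left h1 (by positivity)
    linarith
  · have h2 : 2 * (r:ℤ) * 1 ≤ 2 * (r:ℤ) * n :=
      mul_le_mul_of_nonneg_left (by omega) (by positivity)
    linarith

lemma tsum_theta_self (r : ℕ) (hr : 0 < r) (m : ℤ) :
    (∑' n : ℤ, (if m + 2 * (r:ℤ) * n = m then
        Complex.exp (-(Real.pi : ℂ) * (2 * r * (n : ℂ) ^ 2 + 2 * m * n)) else 0)) = 1 := by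
  rw [tsum_eq_single 0]
  · simp
  · intro n hn
    rw [if_neg]
    intro h
    have : 2 * (r:ℤ) * n = 0 := by omega
    have hr' : (0:ℤ) < r := by exact_mod_cast hr
    rcases mul_eq_zero.mp this with h' | h'
    · omega
    · exact hn h'

lemma continuous_zeta (r : ℕ) (hr : 0 < r) (j : ℤ) :
    Continuous (fun x : ℝ => zeta r j (x : ℂ)) := by
  unfold zeta
  exact continuous_const.mul ((continuous_theta r hr j).sub (continuous_theta r hr (-j)))

lemma continuous_E (m : ℤ) :
    Continuous (fun x : ℝ => Complex.exp (2 * Real.pi * Complex.I * (-m) * (x:ℂ))) := by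
  apply Complex.continuous_exp.comp
  fun_prop

open MeasureTheory intervalIntegral in
lemma integral_zeta (r : ℕ) (hr : 2 ≤ r) {j m : ℤ} (hj1 : 1 ≤ j) (hj2 : j ≤ (r:ℤ) - 1)
    (hm1 : 1 ≤ m) (hm2 : m ≤ (r:ℤ) - 1) :
    (∫ x in (0:ℝ)..1, zeta r j (x : ℂ) * Complex.exp (2 * Real.pi * Complex.I * (-m) * x)) =
      if j = m then (((r : ℝ) ^ ((1 : ℝ) / 4) : ℝ) : ℂ) *
        Complex.exp (-(Real.pi : ℂ) * (j : ℂ) ^ 2 / (2 * r)) else 0 := by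
  have hr0 : 0 < r := by omega
  have hkey : ∀ x : ℝ, zeta r j (x : ℂ) * Complex.exp (2 * Real.pi * Complex.I * (-m) * (x:ℂ)) =
      (((r : ℝ) ^ ((1 : ℝ) / 4) : ℝ) : ℂ) * Complex.exp (-(Real.pi : ℂ) * (j : ℂ) ^ 2 / (2 * r)) *
      (theta r j (x:ℂ) * Complex.exp (2 * Real.pi * Complex.I * (-m) * (x:ℂ)) -
       theta r (-j) (x:ℂ) * Complex.exp (2 * Real.pi * Complex.I * (-m) * (x:ℂ))) := by
    intro x; rw [zeta]; ring
  simp_rw [hkey]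
  rw [intervalIntegral.integral_const_mul, intervalIntegral.integral_sub
    (f := fun x : ℝ => theta r j (x:ℂ) * Complex.exp (2 * Real.pi * Complex.I * (-m) * (x:ℂ)))
    (g := fun x : ℝ => theta r (-j) (x:ℂ) * Complex.exp (2 * Real.pi * Complex.I * (-m) * (x:ℂ)))
    (((continuous_theta r hr0 j).mul (continuous_E m)).intervalIntegrable 0 1)
    (((continuous_theta r hr0 (-j)).mul (continuous_E m)).intervalIntegrable 0 1),
    integral_theta r hr0 j m, integral_theta r hr0 (-j) m]
  have hB : (∑' n : ℤ, (if -j + 2 * (r:ℤ) * n = m then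
      Complex.exp (-(Real.pi : ℂ) * (2 * r * (n : ℂ) ^ 2 + 2 * (-j : ℤ) * n)) else 0)) = 0 := by
    convert tsum_zero with n
    rw [if_neg (arith_b r hr hj1 hj2 hm1 hm2 n)]
  rw [hB, sub_zero]
  by_cases h : j = m
  · subst h
    rw [tsum_theta_self r hr0 j, if_pos rfl, mul_one]
  · rw [if_neg h]
    have hA : (∑' n : ℤ, (if j + 2 * (r:ℤ) * n = m then
        Complex.exp (-(Real.pi : ℂ) * (2 * r * (n : ℂ) ^ 2 + 2 * j * n)) else 0)) = 0 := by
      convert tsum_zero with n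
      rw [if_neg]
      intro hc
      exact h (arith_a r hr hj1 hj2 hm1 hm2 n hc).1
    rw [hA, mul_zero]

/-- The functions `ζ_1, …, ζ_{r−1} : ℂ → ℂ` are linearly independent over `ℂ`. -/
theorem zeta_linearIndependent (r : ℕ) (hr : 2 ≤ r) :
    LinearIndependent ℂ (fun j : Fin (r - 1) => zeta r ((j : ℤ) + 1)) := by
  have hr0 : 0 < r := by omega
  rw [Fintype.linearIndependent_iff]
  intro g hg i₀
  set m : ℤ := (i₀ : ℤ) + 1 with hm
  have hbound : ∀ i : Fin (r - 1), 1 ≤ (i:ℤ) + 1 ∧ (i:ℤ) + 1 ≤ (r:ℤ) - 1 := by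
    intro i
    have := i.isLt
    omega
  have hx : ∀ x : ℂ, ∑ i : Fin (r-1), g i * zeta r ((i:ℤ)+1) x = 0 := by
    intro x
    have := congrFun hg x
    simpa [Finset.sum_apply, Pi.smul_apply, smul_eq_mul] using this
  have hint : ∀ i : Fin (r-1), IntervalIntegrable
      (fun x : ℝ => g i * (zeta r ((i:ℤ)+1) (x:ℂ) *
        Complex.exp (2 * Real.pi * Complex.I * (-m) * x))) MeasureTheory.volume 0 1 := by
    intro i
    exact (continuous_const.mul
      ((continuous_zeta r hr0 _).mul (continuous_E m))).intervalIntegrable 0 1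
  have h0 : (∫ x in (0:ℝ)..1, ∑ i : Fin (r-1), g i * (zeta r ((i:ℤ)+1) (x:ℂ) *
      Complex.exp (2 * Real.pi * Complex.I * (-m) * x))) = 0 := by
    have : ∀ x : ℝ, ∑ i : Fin (r-1), g i * (zeta r ((i:ℤ)+1) (x:ℂ) *
        Complex.exp (2 * Real.pi * Complex.I * (-m) * x)) = 0 := by
      intro x
      simp_rw [← mul_assoc]
      rw [← Finset.sum_mul, hx, zero_mul]
    simp_rw [this]
    simp
  rw [intervalIntegral.integral_finset_sum (fun i _ => hint i)] at h0
  have hval : ∀ i : Fin (r-1),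
      (∫ x in (0:ℝ)..1, g i * (zeta r ((i:ℤ)+1) (x:ℂ) *
        Complex.exp (2 * Real.pi * Complex.I * (-m) * x))) =
      g i * (if ((i:ℤ)+1) = m then (((r : ℝ) ^ ((1 : ℝ) / 4) : ℝ) : ℂ) *
        Complex.exp (-(Real.pi : ℂ) * (((i:ℤ)+1 : ℤ) : ℂ) ^ 2 / (2 * r)) else 0) := by
    intro i
    rw [intervalIntegral.integral_const_mul,
      integral_zeta r hr (hbound i).1 (hbound i).2 (hbound i₀).1 (hbound i₀).2]
  simp_rw [hval] at h0
  rw [Finset.sum_eq_single i₀] at h0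
  · rw [if_pos rfl] at h0
    have hC : (((r : ℝ) ^ ((1 : ℝ) / 4) : ℝ) : ℂ) *
        Complex.exp (-(Real.pi : ℂ) * (((i₀:ℤ)+1 : ℤ) : ℂ) ^ 2 / (2 * r)) ≠ 0 := by
      apply mul_ne_zero _ (Complex.exp_ne_zero _)
      simp only [ne_eq, Complex.ofReal_eq_zero]
      positivity
    exact (mul_eq_zero.mp h0).resolve_right hC
  · intro i _ hi
    rw [if_neg, mul_zero]
    intro hc
    apply hi
    have : (i:ℤ) = (i₀:ℤ) := by omega
    exact Fin.ext (by exact_mod_cast this)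
  · intro h; exact absurd (Finset.mem_univ i₀) h
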